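/- If round j dominates round i, then for every natural number k, round j+k dominates round i+k. -/
import Mathlib


open Finset

/-- Tie-retention synchronous majority update. -/
def majUpd {V : Type*} [Fintype V] [DecidableEq V] (G : SimpleGraph V)
    [DecidableRel G.Adj] (W : Finset V) : Finset V :=
  Finset.univ.filter fun v =>
    G.degree v < 2 * ((G.neighborFinset v) ∩ W).card ∨
      (G.degree v = 2 * ((G.neighborFinset v) ∩ W).card ∧ v ∈ W)

lemma majUpd_mono {V : Type*} [Fintype V] [DecidableEq V] (G : SimpleGraph V)
    [DecidableRel G.Adj] {W W' : Finset V} (h : W ⊆ W') :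
    majUpd G W ⊆ majUpd G W' := by
  intro v hv
  simp only [majUpd, mem_filter, mem_univ, true_and] at hv ⊢
  have hcard : ((G.neighborFinset v) ∩ W).card ≤ ((G.neighborFinset v) ∩ W').card :=
    card_le_card (inter_subset_inter_left h)
  rcases hv with hlt | ⟨heq, hmem⟩
  · exact Or.inl (lt_of_lt_of_le hlt (by omega))
  · rcases lt_or_eq_of_le hcard with hc | hc
    · exact Or.inl (by omega)
    · exact Or.inr ⟨by omega, h hmem⟩

/-- If round `j` dominates round `i`, then round `j+k` dominates round `i+k`. -/
theorem dominate_add {V : Type*} [Fintype V] [DecidableEq V] (G : SimpleGraph V)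
    [DecidableRel G.Adj] (W₀ : Finset V) (i j : ℕ)
    (h : (majUpd G)^[i] W₀ ⊆ (majUpd G)^[j] W₀) :
    ∀ k : ℕ, (majUpd G)^[i + k] W₀ ⊆ (majUpd G)^[j + k] W₀ := by
  intro k
  induction k with
  | zero => simpa using h
  | succ n ih =>
      rw [← Nat.add_assoc, ← Nat.add_assoc, Function.iterate_succ_apply',
        Function.iterate_succ_apply']
      exact majUpd_mono G ih
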